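/- (Key greedy recursion lemma) Let f be a monotone submodular set function on subsets of a finite type with f(∅) = 0, let OPT = f(S) for some fixed set S with |S| = k ≥ 1, and let I_{t+1} be obtained from I_t by adding an element of maximal marginal gain over all elements. Then OPT − f(I_{t+1}) ≤ (1 − 1/k)·(OPT − f(I_t)). -/

import Mathlib

theorem greedy_recursion (m k : ℕ) (hk : 1 ≤ k) (f : Finset (Fin m) → ℝ)
    (hmono : ∀ I J : Finset (Fin m), I ⊆ J → f I ≤ f J)
    (hsub : ∀ (I J : Finset (Fin m)) (x : Fin m), I ⊆ J → x ∉ J →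
      f (insert x J) + f I ≤ f (insert x I) + f J)
    (hempty : f ∅ = 0)
    (S : Finset (Fin m)) (hS : S.card = k)
    (It It1 : Finset (Fin m)) (x : Fin m) (hx : It1 = insert x It)
    (hgreedy : ∀ y : Fin m, f (insert y It) - f It ≤ f (insert x It) - f It) :
    f S - f It1 ≤ (1 - 1 / (k : ℝ)) * (f S - f It) := by
  have key : ∀ T : Finset (Fin m),
      f (It ∪ T) - f It ≤ ∑ y ∈ T, (f (insert y It) - f It) := by
    intro T
    induction T using Finset.induction_on with
    | empty => simp
    | insert _ _ ha ih =>
      rename_i a T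
      rw [Finset.sum_insert ha]
      have hunion : It ∪ insert a T = insert a (It ∪ T) := by
        ext z; simp [or_left_comm, or_comm, or_assoc]
      by_cases haIT : a ∈ It ∪ T
      · have : insert a (It ∪ T) = It ∪ T := Finset.insert_eq_self.mpr haIT
        rw [hunion, this]
        have hge : 0 ≤ f (insert a It) - f It := by
          have := hmono It (insert a It) (Finset.subset_insert _ _)
          linarith
        linarith
      · have hsub' := hsub It (It ∪ T) a Finset.subset_union_left haIT
        rw [hunion]
        linarith
  have hsum : f S - f It ≤ (k : ℝ) * (f It1 - f It) := by
    have h1 : f S ≤ f (It ∪ S) := hmono S (It ∪ S) Finset.subset_union_right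
    have h2 : ∑ y ∈ S, (f (insert y It) - f It) ≤
        ∑ _y ∈ S, (f (insert x It) - f It) :=
      Finset.sum_le_sum fun y _ => hgreedy y
    have h3 : ∑ _y ∈ S, (f (insert x It) - f It)
        = (k : ℝ) * (f It1 - f It) := by
      rw [Finset.sum_const, hS, hx, nsmul_eq_mul]
    have := key S
    linarith
  have hkpos : (0 : ℝ) < k := by exact_mod_cast hk
  have hgain : 0 ≤ f It1 - f It := by
    rw [hx]
    have := hmono It (insert x It) (Finset.subset_insert _ _)
    linarith
  have : (1 - 1 / (k : ℝ)) * (f S - f It) - (f S - f It1)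
      = (1 / (k : ℝ)) * ((k : ℝ) * (f It1 - f It) - (f S - f It)) := by
    field_simp
    ring
  nlinarith [mul_nonneg (le_of_lt (one_div_pos.mpr hkpos))
    (sub_nonneg.mpr hsum)]
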